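/- Let n, m, v, d, k be natural numbers with d ≥ 1, 1 ≤ k ≤ v, and v + 1 ≤ m ≤ n, and set x = v/n as a real number. Then (C(n,v) : ℝ) · C(m, v+1) · (C(v,k)/C(n,k))^{d(v+1)} < c₀(x) · c₁(x)^n, where c₀(x) = e · x^{dk−1} and c₁(x) = e^{2x} · x^{(dk−2)x} (real powers). -/

import Mathlib

open Real Finset

lemma descFact_mul_pow_le (k : ℕ) : ∀ v n : ℕ, v ≤ n →
    v.descFactorial k * n ^ k ≤ n.descFactorial k * v ^ k := by
  induction k with
  | zero => simp
  | succ k ih =>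
    intro v n hvn
    rw [Nat.descFactorial_succ, Nat.descFactorial_succ, pow_succ, pow_succ]
    have h1 : (v - k) * n ≤ (n - k) * v := by
      rcases le_or_gt k v with h | h
      · calc (v - k) * n = v * n - k * n := by rw [Nat.sub_mul]
          _ ≤ n * v - k * v := by
              rw [Nat.mul_comm v n]; exact Nat.sub_le_sub_left (Nat.mul_le_mul_left k hvn) _
          _ = (n - k) * v := by rw [Nat.sub_mul]
      · simp [Nat.sub_eq_zero_of_le h.le]
    calc (v - k) * v.descFactorial k * (n ^ k * n)
        = ((v - k) * n) * (v.descFactorial k * n ^ k) := by ring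
      _ ≤ ((n - k) * v) * (n.descFactorial k * v ^ k) := Nat.mul_le_mul h1 (ih v n hvn)
      _ = (n - k) * n.descFactorial k * (v ^ k * v) := by ring

lemma choose_ratio_le (v n k : ℕ) (hvn : v ≤ n) :
    v.choose k * n ^ k ≤ n.choose k * v ^ k := by
  have h := descFact_mul_pow_le k v n hvn
  rw [Nat.descFactorial_eq_factorial_mul_choose, Nat.descFactorial_eq_factorial_mul_choose] at h
  have h2 : k.factorial * (v.choose k * n ^ k) ≤ k.factorial * (n.choose k * v ^ k) := by
    calc k.factorial * (v.choose k * n ^ k) = k.factorial * v.choose k * n ^ k := by ring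
      _ ≤ k.factorial * n.choose k * v ^ k := h
      _ = k.factorial * (n.choose k * v ^ k) := by ring
  exact Nat.le_of_mul_le_mul_left h2 (Nat.factorial_pos k)

-- strict: v^v / v! < exp v for v ≥ 1
lemma pow_div_fact_lt_exp (v : ℕ) (hv : 1 ≤ v) :
    (v : ℝ) ^ v / (v.factorial : ℝ) < Real.exp v := by
  have hne : (0 : ℕ) ≠ v := by omega
  have hsub : ({0, v} : Finset ℕ) ⊆ range (v + 1) := by
    intro i hi; simp at hi; rcases hi with h | h <;> simp [h]
  have h1 : (1 : ℝ) + (v : ℝ) ^ v / (v.factorial : ℝ) ≤ ∑ i ∈ range (v + 1), (v : ℝ) ^ i / (i.factorial:ℝ) := by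
    have := Finset.sum_le_sum_of_subset_of_nonneg hsub
      (fun i _ _ => by positivity : ∀ i ∈ range (v+1), i ∉ ({0, v} : Finset ℕ) → 0 ≤ (v:ℝ)^i / (i.factorial:ℝ))
    rw [Finset.sum_pair hne, pow_zero, Nat.factorial_zero] at this
    simpa using this
    
  have h2 := Real.sum_le_exp_of_nonneg (x := (v : ℝ)) (by positivity) (v + 1)
  linarith


theorem stmt_7 (n m v d k : ℕ) (hd : 1 ≤ d) (hk : 1 ≤ k) (hkv : k ≤ v)
    (hvm : v + 1 ≤ m) (hmn : m ≤ n) :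
    (n.choose v : ℝ) * (m.choose (v + 1) : ℝ) *
        ((v.choose k : ℝ) / (n.choose k : ℝ)) ^ (d * (v + 1)) <
      (Real.exp 1 * ((v : ℝ) / n) ^ ((d : ℝ) * k - 1)) *
        (Real.exp (2 * ((v : ℝ) / n)) *
          ((v : ℝ) / n) ^ (((d : ℝ) * k - 2) * ((v : ℝ) / n))) ^ n := by
  have hv : 1 ≤ v := hk.trans hkv
  have hvn : v + 1 ≤ n := hvm.trans hmn
  have hv0 : (0:ℝ) < v := by exact_mod_cast hv
  have hn0 : (0:ℝ) < n := by
    have : 1 ≤ n := le_trans (by omega) hvn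
    exact_mod_cast this
  set x : ℝ := (v:ℝ)/n with hxdef
  have hx : 0 < x := by positivity
  have hxn : x * n = v := by rw [hxdef, div_mul_cancel₀ _ hn0.ne']
  -- Bound 1: strict
  have b1 : (n.choose v : ℝ) < Real.exp 1 ^ v * ((n:ℝ)/v) ^ v := by
    have h1 : (n.choose v : ℝ) ≤ (n:ℝ) ^ v / (v.factorial : ℝ) := by
      have := Nat.choose_le_pow_div (α := ℝ) v n
      simpa using this
    have h2 := pow_div_fact_lt_exp v hv
    calc (n.choose v : ℝ) ≤ (n:ℝ) ^ v / (v.factorial : ℝ) := h1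
      _ = ((n:ℝ)^v/(v:ℝ)^v) * ((v:ℝ)^v/(v.factorial:ℝ)) := by
          rw [div_mul_div_comm, mul_comm ((n:ℝ)^v) ((v:ℝ)^v),
            mul_div_mul_left _ _ (ne_of_gt (pow_pos hv0 v))]
      _ < ((n:ℝ)^v/(v:ℝ)^v) * Real.exp v := by
          exact mul_lt_mul_of_pos_left h2 (by positivity)
      _ = Real.exp 1 ^ v * ((n:ℝ)/v) ^ v := by
          rw [← Real.exp_nat_mul, mul_one, div_pow]; ring
  -- Bound 2
  have b2 : (m.choose (v+1) : ℝ) ≤ Real.exp 1 ^ (v+1) * ((n:ℝ)/v) ^ (v+1) := by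
    have h1 : (m.choose (v+1) : ℝ) ≤ (n.choose (v+1) : ℝ) := by
      exact_mod_cast Nat.choose_le_choose (v+1) hmn
    have h2 : (n.choose (v+1) : ℝ) ≤ (n:ℝ) ^ (v+1) / ((v+1).factorial : ℝ) := by
      have := Nat.choose_le_pow_div (α := ℝ) (v+1) n
      simpa using this
    have h3 : ((v:ℝ)+1) ^ (v+1) / ((v+1).factorial : ℝ) ≤ Real.exp ((v:ℝ)+1) := by
      have := Real.pow_div_factorial_le_exp (x := (v:ℝ)+1) (by positivity) (v+1)
      simpa [Nat.cast_add] using this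
    have h4 : (n:ℝ) ^ (v+1) / ((v+1).factorial : ℝ)
        ≤ ((n:ℝ)^(v+1)/((v:ℝ)+1)^(v+1)) * Real.exp ((v:ℝ)+1) := by
      calc (n:ℝ) ^ (v+1) / ((v+1).factorial : ℝ)
          = ((n:ℝ)^(v+1)/((v:ℝ)+1)^(v+1)) * (((v:ℝ)+1)^(v+1)/((v+1).factorial:ℝ)) := by
            rw [div_mul_div_comm, mul_comm ((n:ℝ)^(v+1)) (((v:ℝ)+1)^(v+1)),
              mul_div_mul_left _ _ (by positivity : ((v:ℝ)+1)^(v+1) ≠ 0)]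
        _ ≤ ((n:ℝ)^(v+1)/((v:ℝ)+1)^(v+1)) * Real.exp ((v:ℝ)+1) := by
            exact mul_le_mul_of_nonneg_left h3 (by positivity)
    have h5 : ((n:ℝ)^(v+1)/((v:ℝ)+1)^(v+1)) * Real.exp ((v:ℝ)+1)
        ≤ Real.exp 1 ^ (v+1) * ((n:ℝ)/v) ^ (v+1) := by
      have hdenom : (v:ℝ)^(v+1) ≤ ((v:ℝ)+1)^(v+1) :=
        pow_le_pow_left₀ (by positivity) (by linarith) _
      calc ((n:ℝ)^(v+1)/((v:ℝ)+1)^(v+1)) * Real.exp ((v:ℝ)+1)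
          ≤ ((n:ℝ)^(v+1)/(v:ℝ)^(v+1)) * Real.exp ((v:ℝ)+1) := by
            gcongr
        _ = Real.exp 1 ^ (v+1) * ((n:ℝ)/v) ^ (v+1) := by
            rw [← Real.exp_nat_mul, mul_one, div_pow]
            push_cast
            ring
    push_cast at h5 ⊢
    linarith [h1, h2, h4]
  -- Bound 3
  have hratio : ((v.choose k : ℝ) / (n.choose k : ℝ)) ≤ x ^ k := by
    have hcnk : (0:ℝ) < (n.choose k : ℝ) := by
      exact_mod_cast Nat.choose_pos (le_trans hkv (by omega))
    have h := choose_ratio_le v n k (by omega)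
    have h' : (v.choose k : ℝ) * (n:ℝ)^k ≤ (n.choose k : ℝ) * (v:ℝ)^k := by
      exact_mod_cast h
    rw [hxdef, div_pow, div_le_div_iff₀ hcnk (by positivity)]
    linarith
  have b3 : ((v.choose k : ℝ) / (n.choose k : ℝ)) ^ (d * (v + 1))
      ≤ x ^ (k * (d * (v + 1))) := by
    have h := pow_le_pow_left₀ (by positivity) hratio (d * (v + 1))
    rwa [← pow_mul] at h
  -- combine strict
  have hmid : (n.choose v : ℝ) * (m.choose (v + 1) : ℝ) *
        ((v.choose k : ℝ) / (n.choose k : ℝ)) ^ (d * (v + 1)) <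
      (Real.exp 1 ^ v * ((n:ℝ)/v) ^ v) * (Real.exp 1 ^ (v+1) * ((n:ℝ)/v) ^ (v+1)) *
        x ^ (k * (d * (v + 1))) := by
    have hB : (0:ℝ) < (m.choose (v+1) : ℝ) := by
      exact_mod_cast Nat.choose_pos hvm
    have hC : (0:ℝ) < ((v.choose k : ℝ) / (n.choose k : ℝ)) ^ (d * (v + 1)) := by
      have h1 : (0:ℝ) < (v.choose k : ℝ) := by exact_mod_cast Nat.choose_pos hkv
      have h2 : (0:ℝ) < (n.choose k : ℝ) := by
        exact_mod_cast Nat.choose_pos (le_trans hkv (by omega))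
      positivity
    calc (n.choose v : ℝ) * (m.choose (v + 1) : ℝ) *
          ((v.choose k : ℝ) / (n.choose k : ℝ)) ^ (d * (v + 1))
        < (Real.exp 1 ^ v * ((n:ℝ)/v) ^ v) * (m.choose (v + 1) : ℝ) *
          ((v.choose k : ℝ) / (n.choose k : ℝ)) ^ (d * (v + 1)) := by
          exact mul_lt_mul_of_pos_right (mul_lt_mul_of_pos_right b1 hB) hC
      _ ≤ (Real.exp 1 ^ v * ((n:ℝ)/v) ^ v) * (Real.exp 1 ^ (v+1) * ((n:ℝ)/v) ^ (v+1)) *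
          x ^ (k * (d * (v + 1))) := by
          have hA' : (0:ℝ) ≤ Real.exp 1 ^ v * ((n:ℝ)/v) ^ v := by positivity
          gcongr
  refine hmid.trans_le (le_of_eq ?_)
  -- equality of the middle bound and the RHS
  have hnv : (n:ℝ)/(v:ℝ) = x⁻¹ := by rw [hxdef, inv_div]
  have key : ∀ a b : ℝ, a = b → x ^ a = x ^ b := fun a b h => by rw [h]
  rw [hnv]
  have hKcast : ((k * (d * (v + 1)) : ℕ) : ℝ) = (k:ℝ) * (d * (v+1)) := by push_cast; ring
  calc Real.exp 1 ^ v * (x⁻¹) ^ v * (Real.exp 1 ^ (v+1) * (x⁻¹) ^ (v+1)) *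
          x ^ (k * (d * (v + 1)))
      = Real.exp 1 ^ (2*v+1) * (x ^ (k * (d * (v + 1))) / x ^ (2*v+1)) := by
        obtain ⟨E, hE⟩ : ∃ E, Real.exp 1 = E := ⟨_, rfl⟩
        rw [hE, inv_pow, inv_pow]
        have hx0 : x ≠ 0 := hx.ne'
        field_simp
        ring
    _ = Real.exp ((2*(v:ℝ)+1)) * x ^ (((k * (d * (v + 1)) : ℕ) : ℝ) - ((2*v+1 : ℕ):ℝ)) := by
        rw [Real.rpow_sub hx, Real.rpow_natCast, Real.rpow_natCast, ← Real.exp_nat_mul, mul_one]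
        congr 1
        push_cast
        ring
    _ = (Real.exp 1 * x ^ ((d : ℝ) * k - 1)) *
        (Real.exp (2 * x) * x ^ (((d : ℝ) * k - 2) * x)) ^ n := by
        rw [mul_pow, ← Real.exp_nat_mul,
          ← Real.rpow_natCast (x ^ (((d:ℝ)*k-2)*x)) n, ← Real.rpow_mul hx.le]
        have e1 : (n:ℝ) * (2 * x) = 2 * (v:ℝ) := by
          rw [hxdef]; field_simp
        have e2 : ((d:ℝ)*k-2)*x*(n:ℝ) = ((d:ℝ)*k-2)*(v:ℝ) := by
          rw [hxdef]; field_simp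
        rw [e1, e2, show Real.exp 1 * x ^ ((d : ℝ) * k - 1) *
            (Real.exp (2 * (v:ℝ)) * x ^ (((d:ℝ)*k-2)*(v:ℝ)))
          = (Real.exp 1 * Real.exp (2*(v:ℝ))) *
            (x ^ ((d : ℝ) * k - 1) * x ^ (((d:ℝ)*k-2)*(v:ℝ))) from by ring,
          ← Real.exp_add, ← Real.rpow_add hx]
        congr 1
        · congr 1
          ring
        · apply key
          push_cast
          ring
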